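/- Let G be a finitely generated group of exponential growth with symmetric generating set S, so that the ball B_n of radius n satisfies #B_n ≥ λⁿ for all n ≥ n₀ and some λ > 1. Let ψ : L → G be any bijection from a language L ⊆ S* to G. Then with λ₁ = (1/2)·log_{|S|}(λ), the proportion of elements g ∈ B_n whose representative w = ψ⁻¹(g) satisfies |w| ≥ λ₁·d_A(g) tends to 1 as n → ∞. -/

import Mathlib

open Filter

/-- The word length of `g` with respect to the symmetric generating set `S`. -/
noncomputable def wordLen {G : Type*} [Group G] (S : Set G) (g : G) : ℕ :=
  sInf {k | ∃ l : List G, (∀ a ∈ l, a ∈ S) ∧ l.prod = g ∧ l.length = k}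

section aux
variable {G : Type*} [Group G]

lemma exists_rep (S : Finset G) (hsym : ∀ a ∈ S, a⁻¹ ∈ S)
    (hgen : Subgroup.closure (S : Set G) = ⊤) (g : G) :
    ∃ l : List G, (∀ a ∈ l, a ∈ S) ∧ l.prod = g := by
  have hg : g ∈ (Subgroup.closure (S : Set G)).toSubmonoid := by
    rw [hgen]; trivial
  rw [Subgroup.closure_toSubmonoid] at hg
  obtain ⟨l, hl, hprod⟩ := Submonoid.exists_list_of_mem_closure hg
  refine ⟨l, fun a ha => ?_, hprod⟩
  rcases hl a ha with h | h
  · exact h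
  · have : a⁻¹ ∈ S := by simpa using h
    simpa using hsym _ this

lemma wordLen_spec (S : Finset G) (hsym : ∀ a ∈ S, a⁻¹ ∈ S)
    (hgen : Subgroup.closure (S : Set G) = ⊤) (g : G) :
    ∃ l : List G, (∀ a ∈ l, a ∈ S) ∧ l.prod = g ∧ l.length = wordLen (S : Set G) g := by
  have hne : {k | ∃ l : List G, (∀ a ∈ l, a ∈ (S : Set G)) ∧ l.prod = g ∧ l.length = k}.Nonempty := by
    obtain ⟨l, h1, h2⟩ := exists_rep S hsym hgen g
    exact ⟨l.length, l, by simpa using h1, h2, rfl⟩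
  obtain ⟨l, h1, h2, h3⟩ := Nat.sInf_mem hne
  exact ⟨l, by simpa using h1, h2, h3⟩

set_option linter.unusedSectionVars false in
lemma lists_finite_card (S : Finset G) (hS : S.Nonempty) (m : ℕ) :
    {l : List G | (∀ a ∈ l, a ∈ S) ∧ l.length ≤ m}.Finite ∧
    {l : List G | (∀ a ∈ l, a ∈ S) ∧ l.length ≤ m}.ncard ≤ (m + 1) * S.card ^ m := by
  classical
  obtain ⟨a₀, ha₀⟩ := hS
  set T : Set (List G) := {l : List G | (∀ a ∈ l, a ∈ S) ∧ l.length ≤ m} with hT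
  set F : List G → ℕ × (Fin m → G) := fun l => (l.length, fun i => l.getD i a₀) with hF
  set W : Finset (ℕ × (Fin m → G)) :=
    Finset.range (m + 1) ×ˢ Fintype.piFinset (fun _ : Fin m => S) with hW
  have hinj : Set.InjOn F T := by
    intro l₁ h₁ l₂ h₂ h
    have hlen : l₁.length = l₂.length := congrArg Prod.fst h
    have hfun := congrArg Prod.snd h
    apply List.ext_getElem hlen
    intro i hi₁ hi₂
    have him : i < m := lt_of_lt_of_le hi₁ h₁.2
    have := congrFun hfun ⟨i, him⟩
    simpa [F, List.getD, List.getElem?_eq_getElem hi₁, List.getElem?_eq_getElem hi₂] using this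
  have hmaps : Set.MapsTo F T (W : Set (ℕ × (Fin m → G))) := by
    intro l hl
    simp only [hW, Finset.coe_product, Set.mem_prod, Finset.mem_coe, Finset.mem_range,
      Fintype.mem_piFinset]
    constructor
    · exact Nat.lt_succ_of_le hl.2
    · intro i
      by_cases h : (i : ℕ) < l.length
      · rw [show (F l).2 i = l.getD i a₀ from rfl, List.getD_eq_getElem l a₀ h]
        exact hl.1 _ (l.getElem_mem h)
      · rw [show (F l).2 i = l.getD i a₀ from rfl, List.getD_eq_default l a₀ (le_of_not_gt h)]
        exact ha₀
  have himfin : (F '' T).Finite := Set.Finite.subset (W.finite_toSet) (Set.mapsTo_iff_image_subset.mp hmaps)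
  have hTfin : T.Finite := Set.Finite.of_finite_image himfin hinj
  refine ⟨hTfin, ?_⟩
  calc T.ncard = (F '' T).ncard := (Set.ncard_image_of_injOn hinj).symm
    _ ≤ (W : Set (ℕ × (Fin m → G))).ncard :=
        Set.ncard_le_ncard (Set.mapsTo_iff_image_subset.mp hmaps) W.finite_toSet
    _ = W.card := Set.ncard_coe_finset W
    _ = (m + 1) * S.card ^ m := by
        rw [hW, Finset.card_product, Finset.card_range, Fintype.card_piFinset_const]

lemma ball_finite (S : Finset G) (hsym : ∀ a ∈ S, a⁻¹ ∈ S)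
    (hgen : Subgroup.closure (S : Set G) = ⊤) (hS : S.Nonempty) (n : ℕ) :
    {g : G | wordLen (S : Set G) g ≤ n}.Finite := by
  have hsub : {g : G | wordLen (S : Set G) g ≤ n} ⊆
      List.prod '' {l : List G | (∀ a ∈ l, a ∈ S) ∧ l.length ≤ n} := by
    intro g hg
    obtain ⟨l, h1, h2, h3⟩ := wordLen_spec S hsym hgen g
    exact ⟨l, ⟨h1, h3 ▸ hg⟩, h2⟩
  exact Set.Finite.subset (Set.Finite.image _ (lists_finite_card S hS n).1) hsub

end aux

/-- Let `G` be a finitely generated group of exponential growth with finite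
symmetric generating set `S` (`#Bₙ ≥ λⁿ` for `n ≥ n₀`, `λ > 1`), and let
`ψ : L → G` be any bijection from a language `L ⊆ S*` to `G`.  Then, with
`λ₁ = (1/2) · log_{|S|} λ`, the proportion of elements `g ∈ Bₙ` whose
representative `w = ψ⁻¹ g` satisfies `|w| ≥ λ₁ · d_A g` tends to `1`. -/
theorem almost_all_linear_lower_bound
    {G : Type*} [Group G] (S : Finset G)
    (hsym : ∀ a ∈ S, a⁻¹ ∈ S) (hcard : 2 ≤ S.card)
    (hgen : Subgroup.closure (S : Set G) = ⊤)
    (L : Set (List G)) (hL : ∀ w ∈ L, ∀ a ∈ w, a ∈ S)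
    (ψ : L → G) (hψ : Function.Bijective ψ)
    (lam : ℝ) (hlam : 1 < lam) (n₀ : ℕ)
    (hgrowth : ∀ n, n₀ ≤ n →
      lam ^ n ≤ (({g : G | wordLen (S : Set G) g ≤ n}).ncard : ℝ)) :
    Tendsto
      (fun n : ℕ =>
        (({g : G | wordLen (S : Set G) g ≤ n ∧ ∀ w : L, ψ w = g →
            (1 / 2 * Real.logb S.card lam) * (wordLen (S : Set G) g : ℝ) ≤
              ((w : List G).length : ℝ)}).ncard : ℝ) /
          (({g : G | wordLen (S : Set G) g ≤ n}).ncard : ℝ))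
      atTop (nhds 1) := by
  classical
  have hSne : S.Nonempty := Finset.card_pos.mp (by omega)
  have hc1 : (1 : ℝ) < (S.card : ℝ) := by
    have : (1 : ℕ) < S.card := by omega
    exact_mod_cast this
  have hc0 : (0 : ℝ) < (S.card : ℝ) := lt_trans one_pos hc1
  have hcne1 : (S.card : ℝ) ≠ 1 := ne_of_gt hc1
  have hlam0 : (0 : ℝ) < lam := lt_trans one_pos hlam
  set lam1 : ℝ := 1 / 2 * Real.logb (S.card : ℝ) lam with hlam1def
  have hlam1_nonneg : 0 ≤ lam1 := mul_nonneg (by norm_num) (Real.logb_nonneg hc1 hlam.le)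
  have hkey_pow : (S.card : ℝ) ^ (lam1 : ℝ) = Real.sqrt lam := by
    rw [hlam1def, mul_comm, Real.rpow_mul hc0.le, Real.rpow_logb hc0 hcne1 hlam0,
      Real.sqrt_eq_rpow]
  have hsq0 : (0 : ℝ) < Real.sqrt lam := Real.sqrt_pos.mpr hlam0
  set r : ℝ := Real.sqrt lam / lam with hrdef
  have hr0 : 0 ≤ r := div_nonneg (Real.sqrt_nonneg _) hlam0.le
  have hr1 : r < 1 := by
    rw [hrdef, div_lt_one hlam0]
    exact (Real.sqrt_lt' hlam0).mpr (by nlinarith)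
  set bnd : ℕ → ℝ := fun n => (lam1 * n + 2) * S.card * r ^ n with hbnd
  have hbnd_tendsto : Tendsto bnd atTop (nhds 0) := by
    have h1 := tendsto_pow_const_mul_const_pow_of_lt_one 1 hr0 hr1
    have h0 := tendsto_pow_const_mul_const_pow_of_lt_one 0 hr0 hr1
    have heq : bnd = fun n : ℕ =>
        (lam1 * S.card) * ((n : ℝ) ^ 1 * r ^ n) + (2 * S.card) * ((n : ℝ) ^ 0 * r ^ n) := by
      funext n; simp only [hbnd, pow_one, pow_zero, one_mul]; ring
    rw [heq]
    simpa using (h1.const_mul (lam1 * S.card)).add (h0.const_mul ((2:ℝ) * (S.card:ℝ)))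
  set e := Equiv.ofBijective ψ hψ with he
  have hBfin : ∀ n : ℕ, {g : G | wordLen (S : Set G) g ≤ n}.Finite :=
    ball_finite S hsym hgen hSne
  -- Bad set cardinality bound
  have hBad : ∀ n : ℕ,
      ((({g : G | wordLen (S : Set G) g ≤ n} \
        {g : G | wordLen (S : Set G) g ≤ n ∧ ∀ w : L, ψ w = g →
          lam1 * (wordLen (S : Set G) g : ℝ) ≤ ((w : List G).length : ℝ)}).ncard : ℝ))
        ≤ (lam1 * n + 2) * S.card * (Real.sqrt lam) ^ n := by
    intro n
    set m := ⌈lam1 * (n : ℝ)⌉₊ with hm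
    set Bad : Set G := {g : G | wordLen (S : Set G) g ≤ n} \
        {g : G | wordLen (S : Set G) g ≤ n ∧ ∀ w : L, ψ w = g →
          lam1 * (wordLen (S : Set G) g : ℝ) ≤ ((w : List G).length : ℝ)} with hBadDef
    set F : G → List G := fun g => ((e.symm g : L) : List G) with hFdef
    have hmapsto : Set.MapsTo F Bad {l : List G | (∀ a ∈ l, a ∈ S) ∧ l.length ≤ m} := by
      intro g hg
      obtain ⟨hgB, hgnot⟩ := hg
      have hgnot' : ¬ (∀ w : L, ψ w = g →
          lam1 * (wordLen (S : Set G) g : ℝ) ≤ ((w : List G).length : ℝ)) := by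
        intro hcon; exact hgnot ⟨hgB, hcon⟩
      push_neg at hgnot'
      obtain ⟨w, hw, hlen⟩ := hgnot'
      have hwe : e.symm g = w := by
        apply e.injective
        rw [Equiv.apply_symm_apply]
        exact hw.symm
      constructor
      · intro a ha
        exact hL _ (e.symm g).2 a ha
      · have h1 : ((F g).length : ℝ) < lam1 * (wordLen (S : Set G) g : ℝ) := by
          rw [hFdef]; simp only; rw [hwe]; exact hlen
        have h2 : lam1 * (wordLen (S : Set G) g : ℝ) ≤ lam1 * n :=
          mul_le_mul_of_nonneg_left (by exact_mod_cast hgB) hlam1_nonneg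
        have h3 : ((F g).length : ℝ) ≤ (m : ℝ) :=
          le_trans (le_trans h1.le h2) (Nat.le_ceil _)
        exact_mod_cast h3
    have hinj : Set.InjOn F Bad := by
      intro x _ y _ h
      exact e.symm.injective (Subtype.coe_injective h)
    have hTfin := (lists_finite_card S hSne m).1
    have hcard1 : Bad.ncard ≤ (m + 1) * S.card ^ m :=
      calc Bad.ncard = (F '' Bad).ncard := (Set.ncard_image_of_injOn hinj).symm
        _ ≤ {l : List G | (∀ a ∈ l, a ∈ S) ∧ l.length ≤ m}.ncard :=
            Set.ncard_le_ncard (Set.mapsTo_iff_image_subset.mp hmapsto) hTfin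
        _ ≤ (m + 1) * S.card ^ m := (lists_finite_card S hSne m).2
    have hm1 : (m : ℝ) < lam1 * n + 1 :=
      Nat.ceil_lt_add_one (mul_nonneg hlam1_nonneg (Nat.cast_nonneg n))
    have hcm : ((S.card : ℝ)) ^ m ≤ (S.card : ℝ) * (Real.sqrt lam) ^ n := by
      have h1 : ((S.card : ℝ)) ^ m = (S.card : ℝ) ^ (m : ℝ) := (Real.rpow_natCast _ m).symm
      have h2 : (S.card : ℝ) ^ (m : ℝ) ≤ (S.card : ℝ) ^ (lam1 * (n : ℝ) + 1) :=
        Real.rpow_le_rpow_of_exponent_le hc1.le hm1.le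
      have h3 : (S.card : ℝ) ^ (lam1 * (n : ℝ) + 1) = (S.card : ℝ) * (Real.sqrt lam) ^ n := by
        rw [Real.rpow_add hc0, Real.rpow_one, Real.rpow_mul hc0.le, hkey_pow,
          Real.rpow_natCast, mul_comm]
      rw [h1, ← h3]; exact h2
    have hln : (0:ℝ) ≤ lam1 * n := mul_nonneg hlam1_nonneg (Nat.cast_nonneg n)
    calc (Bad.ncard : ℝ) ≤ (((m + 1) * S.card ^ m : ℕ) : ℝ) := by exact_mod_cast hcard1
      _ = ((m : ℝ) + 1) * (S.card : ℝ) ^ m := by push_cast; ring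
      _ ≤ (lam1 * n + 2) * ((S.card : ℝ) * (Real.sqrt lam) ^ n) := by
          exact mul_le_mul (by linarith) hcm (pow_nonneg hc0.le m) (by linarith)
      _ = (lam1 * n + 2) * S.card * (Real.sqrt lam) ^ n := by ring
  -- squeeze
  have hGsub : ∀ n : ℕ,
      {g : G | wordLen (S : Set G) g ≤ n ∧ ∀ w : L, ψ w = g →
        lam1 * (wordLen (S : Set G) g : ℝ) ≤ ((w : List G).length : ℝ)} ⊆
      {g : G | wordLen (S : Set G) g ≤ n} := fun n g hg => hg.1
  apply tendsto_of_tendsto_of_tendsto_of_le_of_le' (g := fun n : ℕ => 1 - bnd n)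
    (h := fun _ : ℕ => (1 : ℝ))
  · simpa using tendsto_const_nhds.sub hbnd_tendsto
  · exact tendsto_const_nhds
  · filter_upwards [eventually_ge_atTop n₀] with n hn
    have hBpos : (0 : ℝ) < ({g : G | wordLen (S : Set G) g ≤ n}.ncard : ℝ) :=
      lt_of_lt_of_le (pow_pos hlam0 n) (hgrowth n hn)
    set Bn := {g : G | wordLen (S : Set G) g ≤ n} with hBn
    set Gn := {g : G | wordLen (S : Set G) g ≤ n ∧ ∀ w : L, ψ w = g →
        lam1 * (wordLen (S : Set G) g : ℝ) ≤ ((w : List G).length : ℝ)} with hGn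
    have hsub2 : Bn \ Gn ⊆ Bn := Set.diff_subset
    have hle : (Bn \ Gn).ncard ≤ Bn.ncard := Set.ncard_le_ncard hsub2 (hBfin n)
    have hGdeq : Gn = Bn \ (Bn \ Gn) := (Set.diff_diff_cancel_left (hGsub n)).symm
    have hcards : (Gn.ncard : ℝ) = (Bn.ncard : ℝ) - ((Bn \ Gn).ncard : ℝ) := by
      rw [hGdeq, Set.ncard_diff hsub2 ((hBfin n).subset hsub2)]
      push_cast [Nat.cast_sub hle]
      rw [← hGdeq]
    have hfrac : ((Bn \ Gn).ncard : ℝ) / (Bn.ncard : ℝ) ≤ bnd n := by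
      have htopnn : (0:ℝ) ≤ (lam1 * n + 2) * S.card * (Real.sqrt lam) ^ n := by
        have hln : (0:ℝ) ≤ lam1 * n := mul_nonneg hlam1_nonneg (Nat.cast_nonneg n)
        have h4 := pow_nonneg hsq0.le n
        exact mul_nonneg (mul_nonneg (by linarith) hc0.le) h4
      have h := div_le_div₀ htopnn (hBad n) (pow_pos hlam0 n) (hgrowth n hn)
      have heqb : (lam1 * n + 2) * S.card * (Real.sqrt lam) ^ n / lam ^ n = bnd n := by
        rw [hbnd]
        simp only [hrdef, div_pow]
        ring
      rw [← heqb]; exact h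
    have : 1 - bnd n ≤ 1 - ((Bn \ Gn).ncard : ℝ) / (Bn.ncard : ℝ) := by linarith
    calc 1 - bnd n ≤ 1 - ((Bn \ Gn).ncard : ℝ) / (Bn.ncard : ℝ) := this
      _ = (Gn.ncard : ℝ) / (Bn.ncard : ℝ) := by
          rw [hcards]
          field_simp
  · filter_upwards [eventually_ge_atTop n₀] with n hn
    have hBpos : (0 : ℝ) < ({g : G | wordLen (S : Set G) g ≤ n}.ncard : ℝ) :=
      lt_of_lt_of_le (pow_pos hlam0 n) (hgrowth n hn)
    apply div_le_one_of_le₀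
    · exact_mod_cast Set.ncard_le_ncard (hGsub n) (hBfin n)
    · exact hBpos.le
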